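/- Let α and β be ordinals and let 𝒫_β(α) denote the set of all subsets of α having order type < β. Then for a topological space X the following are equivalent: (1) X is [𝒫_β(α), α]-compact; (2) for every family (x_z), indexed by z ∈ 𝒫_β(α), of points of X, if for each γ < α we put P_γ = { x_z | z ∈ 𝒫_β(α) and γ ∈ z }, then ⋂_{γ<α} closure(P_γ) ≠ ∅. -/

import Mathlib

/-- A topological space `X` is `[B,A]`-compact if every `A`-indexed family of open
sets covering `X` admits a subfamily indexed by some `H ∈ B` which still covers `X`. -/
def BACompact {A : Type*} (B : Set (Set A)) (X : Type*) [TopologicalSpace X] : Prop :=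
  ∀ O : A → Set X, (∀ a, IsOpen (O a)) → (⋃ a, O a) = Set.univ →
    ∃ H ∈ B, (⋃ a ∈ H, O a) = Set.univ

/-- The order type of a subset of a well-ordered type, with the inherited order. -/
noncomputable def orderTypeSet {σ : Type u} [LinearOrder σ] [WellFoundedLT σ]
    (z : Set σ) : Ordinal.{u} :=
  @Ordinal.type z (Subrel (· < ·) (· ∈ z)) (by infer_instance)

/-- `𝒫_β(α)`: the set of all subsets of (the canonical type of order type) `α`
having order type `< β`. -/
noncomputable def Pbeta (α β : Ordinal) : Set (Set α.ToType) :=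
  {z : Set α.ToType | orderTypeSet z < β}

theorem stmt_6 (α β : Ordinal) (X : Type*) [TopologicalSpace X] :
    BACompact (Pbeta α β) X ↔
      ∀ x : Pbeta α β → X,
        (⋂ γ : α.ToType,
          closure {y : X | ∃ z : Pbeta α β, γ ∈ (z : Set α.ToType) ∧ x z = y}).Nonempty := by
  constructor
  · intro hc x
    by_contra hempty
    rw [Set.not_nonempty_iff_eq_empty] at hempty
    obtain ⟨H, hH, hcov⟩ := hc
      (fun γ => (closure {y : X | ∃ z : Pbeta α β, γ ∈ (z : Set α.ToType) ∧ x z = y})ᶜ)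
      (fun γ => isClosed_closure.isOpen_compl)
      (by rw [← Set.compl_iInter, hempty, Set.compl_empty])
    have hx : x ⟨H, hH⟩ ∈
        ⋃ γ ∈ H, (closure {y : X | ∃ z : Pbeta α β, γ ∈ (z : Set α.ToType) ∧ x z = y})ᶜ := by
      rw [hcov]; trivial
    obtain ⟨γ, hγH, hxmem⟩ := Set.mem_iUnion₂.mp hx
    exact hxmem (subset_closure ⟨⟨H, hH⟩, hγH, rfl⟩)
  · intro h O hO hcov
    by_contra hcon
    push_neg at hcon
    have hpick : ∀ z : Pbeta α β, ∃ p : X, p ∉ ⋃ γ ∈ (z : Set α.ToType), O γ := by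
      intro z
      rcases (Set.ne_univ_iff_exists_notMem _).mp (hcon z z.2) with ⟨p, hp⟩
      exact ⟨p, hp⟩
    choose x hx using hpick
    obtain ⟨y, hy⟩ := h x
    have hyu : y ∈ ⋃ γ, O γ := by rw [hcov]; trivial
    obtain ⟨γ, hγ⟩ := Set.mem_iUnion.mp hyu
    have hyc : y ∈ closure {w : X | ∃ z : Pbeta α β, γ ∈ (z : Set α.ToType) ∧ x z = w} :=
      Set.mem_iInter.mp hy γ
    obtain ⟨w, hwO, z, hγz, hxz⟩ := mem_closure_iff.mp hyc (O γ) (hO γ) hγ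
    exact hx z (Set.mem_biUnion hγz (hxz ▸ hwO))
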